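/- Let X be a finite-dimensional real vector space, K ⊂ X a convex body with 0 in its interior, and L : X → X a linear map that, viewed as a linear vector field on X, is forward tangent to ∂K. Then tr L = 0 and e^{tL}(K) = K for all t ∈ ℝ, where e^{tL} denotes the exponential of the operator tL. -/

import Mathlib

open Filter Topology Metric Set NormedSpace

/-- `v` is *forward tangent* to `∂B` at `x` if there are a sequence `p i ∈ ∂B` with `p i → x`
and positive reals `c i` with `c i • (p i - x) → v`. -/
def IsForwardTangent {X : Type*} [NormedAddCommGroup X] [NormedSpace ℝ X]
    (B : Set X) (x v : X) : Prop :=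
  ∃ (p : ℕ → X) (c : ℕ → ℝ), (∀ i, p i ∈ frontier B) ∧ (∀ i, 0 < c i) ∧
    Tendsto p atTop (𝓝 x) ∧ Tendsto (fun i => c i • (p i - x)) atTop (𝓝 v)

section Helpers
set_option linter.unusedSectionVars false

variable {X : Type*} [NormedAddCommGroup X] [NormedSpace ℝ X] [FiniteDimensional ℝ X]

lemma subtang_interior {S : Set X} {z v : X} (hz : z ∈ interior S)
    {ε δ : ℝ} (hε : 0 < ε) (hδ : 0 < δ) :
    ∃ h : ℝ, 0 < h ∧ h < δ ∧ infDist (z + h • v) S ≤ ε * h := by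
  obtain ⟨ρ, hρ, hball⟩ := Metric.isOpen_iff.1 isOpen_interior z hz
  set h : ℝ := min (δ/2) (ρ/(2*(‖v‖+1))) with hh
  have hhpos : 0 < h := lt_min (by positivity) (by positivity)
  refine ⟨h, hhpos, lt_of_le_of_lt (min_le_left _ _) (by linarith), ?_⟩
  have hmem : z + h • v ∈ S := by
    apply interior_subset (hball ?_)
    rw [mem_ball_iff_norm]
    have h2 : h ≤ ρ/(2*(‖v‖+1)) := min_le_right _ _
    have : ‖z + h • v - z‖ = h * ‖v‖ := by
      rw [add_sub_cancel_left, norm_smul, Real.norm_eq_abs, abs_of_pos hhpos]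
    rw [this]
    have hv1 : 0 ≤ ‖v‖ := norm_nonneg v
    have ha : (0:ℝ) < ‖v‖ + 1 := by positivity
    have e1 : h * ‖v‖ ≤ h * (‖v‖ + 1) := by nlinarith
    have e2 : h * (‖v‖ + 1) ≤ ρ / (2 * (‖v‖ + 1)) * (‖v‖ + 1) :=
      mul_le_mul_of_nonneg_right h2 ha.le
    have e3 : ρ / (2 * (‖v‖ + 1)) * (‖v‖ + 1) = ρ / 2 := by field_simp
    linarith
  rw [infDist_zero_of_mem hmem]
  positivity

lemma subtang_seq {S : Set X} {z v : X} (hzS : z ∈ S)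
    (p : ℕ → X) (c : ℕ → ℝ) (hpS : ∀ i, p i ∈ S) (hc : ∀ i, 0 < c i)
    (hp : Tendsto p atTop (𝓝 z)) (hcp : Tendsto (fun i => c i • (p i - z)) atTop (𝓝 v))
    {ε δ : ℝ} (hε : 0 < ε) (hδ : 0 < δ) :
    ∃ h : ℝ, 0 < h ∧ h < δ ∧ infDist (z + h • v) S ≤ ε * h := by
  rcases eq_or_ne v 0 with hv | hv
  · refine ⟨δ/2, by positivity, by linarith, ?_⟩
    rw [hv, smul_zero, add_zero, infDist_zero_of_mem hzS]
    positivity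
  · have hvn : 0 < ‖v‖ := norm_pos_iff.2 hv
    have hpz : Tendsto (fun i => ‖p i - z‖) atTop (𝓝 0) := by
      have := (hp.sub (tendsto_const_nhds (x := z))).norm
      simpa using this
    have hcinf : Tendsto c atTop atTop := by
      rw [Filter.tendsto_atTop]
      intro M
      set K : ℝ := max M 1 with hK
      have hKpos : 0 < K := lt_of_lt_of_le one_pos (le_max_right _ _)
      have h1 : ∀ᶠ i in atTop, ‖v‖/2 < ‖c i • (p i - z)‖ :=
        hcp.norm.eventually (eventually_gt_nhds (half_lt_self hvn))
      have h2 : ∀ᶠ i in atTop, ‖p i - z‖ < ‖v‖/(2*K) :=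
        hpz.eventually (eventually_lt_nhds (by positivity))
      filter_upwards [h1, h2] with i h1i h2i
      have hnorm : ‖c i • (p i - z)‖ = c i * ‖p i - z‖ := by
        rw [norm_smul, Real.norm_eq_abs, abs_of_pos (hc i)]
      rw [hnorm] at h1i
      have hapos : 0 < ‖p i - z‖ := by nlinarith [hc i, hvn, norm_nonneg (p i - z)]
      have e1 : ‖p i - z‖ * (2*K) < ‖v‖ := (lt_div_iff₀ (by positivity)).1 h2i
      have hKc : K < c i := by nlinarith [e1, h1i, hapos]
      exact le_trans (le_max_left _ _) hKc.le
    have hev : ∀ᶠ i in atTop, (1/δ < c i ∧ ‖v - c i • (p i - z)‖ < ε) := by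
      have h3 : ∀ᶠ i in atTop, 1/δ < c i := hcinf.eventually_gt_atTop _
      have h4 : ∀ᶠ i in atTop, ‖v - c i • (p i - z)‖ < ε := by
        have : Tendsto (fun i => v - c i • (p i - z)) atTop (𝓝 0) := by
          have := (tendsto_const_nhds (x := v) (f := atTop)).sub hcp
          simpa using this
        exact this.norm.eventually (by simpa using eventually_lt_nhds hε)
      exact h3.and h4
    obtain ⟨i, hi1, hi2⟩ := hev.exists
    refine ⟨1 / c i, one_div_pos.2 (hc i), ?_, ?_⟩
    · rw [div_lt_iff₀ (hc i)]
      rw [div_lt_iff₀ hδ] at hi1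
      linarith [mul_comm δ (c i) ▸ hi1]
    · have hle : infDist (z + (1 / c i) • v) S ≤ dist (z + (1 / c i) • v) (p i) :=
        infDist_le_dist_of_mem (hpS i)
      have heq : dist (z + (1 / c i) • v) (p i) = (1 / c i) * ‖v - c i • (p i - z)‖ := by
        rw [dist_eq_norm]
        have : z + (1 / c i) • v - p i = (1 / c i) • (v - c i • (p i - z)) := by
          rw [smul_sub, smul_smul, one_div_mul_cancel (hc i).ne', one_smul]
          abel
        rw [this, norm_smul, Real.norm_eq_abs, abs_of_pos (one_div_pos.2 (hc i))]
      rw [heq] at hle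
      calc infDist (z + (1 / c i) • v) S ≤ (1 / c i) * ‖v - c i • (p i - z)‖ := hle
        _ ≤ (1 / c i) * ε := by
            exact mul_le_mul_of_nonneg_left hi2.le (one_div_pos.2 (hc i)).le
        _ = ε * (1 / c i) := mul_comm _ _

open Matrix in
lemma hasDerivAt_det_at_one {n : ℕ} {M : ℝ → Matrix (Fin n) (Fin n) ℝ}
    {A : Matrix (Fin n) (Fin n) ℝ}
    (hM : ∀ i j, HasDerivAt (fun t => M t i j) (A i j) 0) (h1 : M 0 = 1) :
    HasDerivAt (fun t => (M t).det) (Matrix.trace A) 0 := by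
  have key : ∀ σ : Equiv.Perm (Fin n), HasDerivAt (fun t => ∏ i, M t (σ i) i)
      (∑ j, (∏ i ∈ Finset.univ.erase j, M 0 (σ i) i) • A (σ j) j) 0 :=
    fun σ => HasDerivAt.fun_finsetProd (fun j _ => hM (σ j) j)
  have hsum : HasDerivAt (fun t => ∑ σ : Equiv.Perm (Fin n),
      ((Equiv.Perm.sign σ : ℤ) : ℝ) * ∏ i, M t (σ i) i)
      (∑ σ : Equiv.Perm (Fin n), ((Equiv.Perm.sign σ : ℤ) : ℝ) *
        ∑ j, (∏ i ∈ Finset.univ.erase j, M 0 (σ i) i) • A (σ j) j) 0 :=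
    HasDerivAt.fun_sum fun σ _ => (key σ).const_mul _
  have heq : (fun t => ∑ σ : Equiv.Perm (Fin n),
      ((Equiv.Perm.sign σ : ℤ) : ℝ) * ∏ i, M t (σ i) i) = fun t => (M t).det := by
    funext t; rw [Matrix.det_apply']
  rw [heq] at hsum
  convert hsum using 1
  rw [Finset.sum_eq_single (1 : Equiv.Perm (Fin n))]
  · simp [h1, Matrix.trace, Matrix.diag, Matrix.one_apply_eq]
  · intro σ _ hσ
    have hzero : ∀ j : Fin n, (∏ i ∈ Finset.univ.erase j, M 0 (σ i) i) = 0 := by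
      intro j
      obtain ⟨k, hk⟩ : ∃ k, σ k ≠ k := by
        by_contra hc; push_neg at hc
        exact hσ (Equiv.ext hc)
      rcases ne_or_eq k j with hkj | rfl
      · refine Finset.prod_eq_zero (Finset.mem_erase.2 ⟨hkj, Finset.mem_univ _⟩) ?_
        rw [h1]; exact Matrix.one_apply_ne hk
      · have hvj : σ k ≠ k := hk
        have hvne : σ (σ k) ≠ σ k := by
          intro hcon
          exact hvj (σ.injective hcon)
        refine Finset.prod_eq_zero (Finset.mem_erase.2 ⟨hvj, Finset.mem_univ _⟩) ?_
        rw [h1]; exact Matrix.one_apply_ne hvne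
    simp [hzero]
  · simp

lemma flow_hasDerivAt (L' : X →L[ℝ] X) (x : X) (t : ℝ) :
    HasDerivAt (fun u => exp (u • L') x) (L' (exp (t • L') x)) t := by
  have h := hasDerivAt_exp_smul_const' (𝕂 := ℝ) L' t
  have h2 := (ContinuousLinearMap.apply ℝ X x).hasFDerivAt.comp_hasDerivAt t h
  simp [ContinuousLinearMap.mul_apply] at h2
  exact h2

lemma flow_invariant (L' : X →L[ℝ] X) (S : Set X) (hS : IsClosed S) (hne : S.Nonempty)
    (hsub : ∀ z ∈ S, ∀ ε > 0, ∀ δ > 0, ∃ h : ℝ, 0 < h ∧ h < δ ∧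
      infDist (z + h • L' z) S ≤ ε * h)
    {x : X} (hx : x ∈ S) {t : ℝ} (ht : 0 ≤ t) : exp (t • L') x ∈ S := by
  set φ : ℝ → X := fun u => exp (u • L') x with hφdef
  have hd : ∀ u, HasDerivAt φ (L' (φ u)) u := fun u => flow_hasDerivAt L' x u
  have hφc : Continuous φ := continuous_iff_continuousAt.2 fun u => (hd u).continuousAt
  set f : ℝ → ℝ := fun u => infDist (φ u) S with hfdef
  have hfc : Continuous f := (continuous_infDist_pt S).comp hφc
  set C : ℝ := ‖L'‖ with hC
  have hC0 : 0 ≤ C := norm_nonneg _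
  have key : ∀ s ∈ Ico 0 t, ∀ r, C * f s < r →
      ∃ᶠ u in 𝓝[>] s, (u - s)⁻¹ * (f u - f s) < r := by
    intro s _ r hr
    obtain ⟨z, hzS, hzd⟩ := hS.exists_infDist_eq_dist hne (φ s)
    have hfs : f s = dist (φ s) z := hzd
    have hfs0 : (0:ℝ) ≤ f s := infDist_nonneg
    set ε₀ : ℝ := (r - C * f s) / 2 with hε₀
    have hε₀pos : 0 < ε₀ := by dsimp [ε₀]; linarith
    -- little-o control from the derivative at s
    have hlo := (hd s).hasDerivWithinAt (s := Set.univ)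
    have hiso : (fun u => φ u - φ s - (u - s) • L' (φ s)) =o[𝓝 s] fun u => u - s :=
      hasDerivAt_iff_isLittleO.mp (hd s)
    have hev : ∀ᶠ u in 𝓝 s, ‖φ u - φ s - (u - s) • L' (φ s)‖ ≤ ε₀ / 2 * ‖u - s‖ :=
      hiso.def (by positivity)
    rw [Metric.eventually_nhds_iff] at hev
    obtain ⟨ρ, hρpos, hρ⟩ := hev
    rw [Filter.frequently_iff]
    intro V hV
    rw [mem_nhdsGT_iff_exists_Ioo_subset] at hV
    obtain ⟨b, hb, hbV⟩ := hV
    set δ : ℝ := min (b - s) ρ with hδ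
    have hδpos : 0 < δ := lt_min (by simpa using hb) hρpos
    obtain ⟨h, hhpos, hhδ, hhsub⟩ := hsub z hzS (ε₀ / 2) (by positivity) δ hδpos
    refine ⟨s + h, hbV ⟨by linarith, by have := min_le_left (b - s) ρ; linarith⟩, ?_⟩
    -- the estimate
    have h1 : ‖φ (s + h) - φ s - h • L' (φ s)‖ ≤ ε₀ / 2 * h := by
      have := hρ (y := s + h) (by
        simp only [Real.dist_eq, add_sub_cancel_left]
        rw [abs_of_pos hhpos]
        exact lt_of_lt_of_le hhδ (min_le_right _ _))
      simpa [abs_of_pos hhpos] using this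
    have h2 : ‖(φ s + h • L' (φ s)) - (z + h • L' z)‖ ≤ f s + h * (C * f s) := by
      have : (φ s + h • L' (φ s)) - (z + h • L' z) = (φ s - z) + h • (L' (φ s) - L' z) := by
        rw [smul_sub]; abel
      rw [this]
      refine (norm_add_le _ _).trans ?_
      have hLz : ‖L' (φ s) - L' z‖ ≤ C * ‖φ s - z‖ := by
        rw [← map_sub]; exact L'.le_opNorm _
      have hnz : ‖φ s - z‖ = f s := by rw [hfs, dist_eq_norm]
      rw [norm_smul, Real.norm_eq_abs, abs_of_pos hhpos]
      have hLz2 : ‖L' (φ s) - L' z‖ ≤ C * f s := by rw [← hnz]; exact hLz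
      nlinarith [mul_le_mul_of_nonneg_left hLz2 hhpos.le]
    have h3 : f (s + h) ≤ infDist (z + h • L' z) S + dist (φ (s + h)) (z + h • L' z) :=
      infDist_le_infDist_add_dist
    have h4 : dist (φ (s + h)) (z + h • L' z) ≤ ε₀ / 2 * h + (f s + h * (C * f s)) := by
      have : dist (φ (s + h)) (z + h • L' z)
          ≤ ‖φ (s + h) - φ s - h • L' (φ s)‖ + ‖(φ s + h • L' (φ s)) - (z + h • L' z)‖ := by
        rw [dist_eq_norm]
        have : φ (s + h) - (z + h • L' z) =
            (φ (s + h) - φ s - h • L' (φ s)) + ((φ s + h • L' (φ s)) - (z + h • L' z)) := by abel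
        rw [this]; exact norm_add_le _ _
      exact this.trans (add_le_add h1 h2)
    have h5 : f (s + h) - f s ≤ h * (ε₀ + C * f s) := by
      have := h3.trans (add_le_add hhsub h4)
      nlinarith
    have h6 : ((s + h) - s)⁻¹ * (f (s + h) - f s) ≤ ε₀ + C * f s := by
      rw [add_sub_cancel_left]
      rw [inv_mul_le_iff₀ hhpos]
      linarith [h5]
    have h7 : ε₀ + C * f s < r := by dsimp [ε₀]; linarith
    exact h6.trans_lt h7
  have hf0 : f 0 ≤ 0 := by
    have : φ 0 = x := by simp [hφdef, exp_zero]
    simp [hfdef, this, infDist_zero_of_mem hx]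
  have := le_gronwallBound_of_liminf_deriv_right_le (f := f) (f' := fun s => C * f s)
    (δ := 0) (K := C) (ε := 0) (a := 0) (b := t) hfc.continuousOn key hf0
    (fun s _ => by simp) t (by simp [ht])
  rw [gronwallBound_ε0_δ0] at this
  have hf0' : f t = 0 := le_antisymm this infDist_nonneg
  have := (hS.mem_iff_infDist_zero hne (x := φ t)).2 hf0'
  exact this

end Helpers

set_option maxHeartbeats 1000000 in
set_option synthInstance.maxHeartbeats 1000000 in
/-- **Lemma.**  Let `K ⊂ X` be a convex body with `0` in its interior and `L : X → X` a linear
map which, viewed as a linear vector field, is forward tangent to `∂K`.  Then `tr L = 0` and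
`e^{tL}(K) = K` for all `t ∈ ℝ`. -/
theorem linear_forwardTangent_field
    {X : Type*} [NormedAddCommGroup X] [NormedSpace ℝ X] [FiniteDimensional ℝ X]
    (K : Set X) (hKcomp : IsCompact K) (hKconv : Convex ℝ K)
    (h0 : (0 : X) ∈ interior K)
    (L : X →ₗ[ℝ] X)
    (htang : ∀ x ∈ frontier K, IsForwardTangent K x (L x)) :
    LinearMap.trace ℝ X L = 0 ∧
      ∀ t : ℝ, (NormedSpace.exp (t • L.toContinuousLinearMap) : X →L[ℝ] X) '' K = K := by
  rcases subsingleton_or_nontrivial X with hss | hnt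
  · constructor
    · rw [Subsingleton.elim L 0, map_zero]
    · intro t
      apply Subset.antisymm
      · rintro _ ⟨y, hy, rfl⟩
        rwa [Subsingleton.elim ((NormedSpace.exp (t • L.toContinuousLinearMap)) y) y]
      · intro v hv
        exact ⟨v, hv, Subsingleton.elim _ _⟩
  have hKcl : IsClosed K := hKcomp.isClosed
  set U : Set X := interior K with hUdef
  set L' : X →L[ℝ] X := L.toContinuousLinearMap with hL'def
  -- frontier facts
  have hfrK : frontier K = K \ U := hKcl.frontier_eq
  have hclU : closure U = K := by
    apply Subset.antisymm
    · rw [← hKcl.closure_eq]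
      exact closure_mono interior_subset
    · intro k hk
      have htd : Tendsto (fun m : ℕ => k + (1/(m+1) : ℝ) • ((0:X) - k)) atTop (𝓝 k) := by
      
        have h1 : Tendsto (fun m : ℕ => (1/(m+1) : ℝ)) atTop (𝓝 0) :=
          tendsto_one_div_add_atTop_nhds_zero_nat
        have := (h1.smul_const ((0:X) - k)).const_add k
        simpa using this
      refine mem_closure_of_tendsto htd (Eventually.of_forall fun m => ?_)
      refine hKconv.add_smul_sub_mem_interior hk h0 ⟨by positivity, ?_⟩
      rw [div_le_one (by positivity)]
      have : (0:ℝ) ≤ (m:ℝ) := Nat.cast_nonneg m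
      linarith
  have hfrU : frontier U = frontier K := by
    rw [isOpen_interior.frontier_eq, hclU, hfrK]
  -- subtangential condition for K
  have hsubK : ∀ z ∈ K, ∀ ε > 0, ∀ δ > 0, ∃ h : ℝ, 0 < h ∧ h < δ ∧
      infDist (z + h • L' z) K ≤ ε * h := by
    intro z hz ε hε δ hδ
    by_cases hzi : z ∈ interior K
    · exact subtang_interior hzi hε hδ
    · have hzf : z ∈ frontier K := by rw [hfrK]; exact ⟨hz, hzi⟩
      obtain ⟨p, c, hpF, hc, hp, hcp⟩ := htang z hzf
      exact subtang_seq hz p c (fun i => hKcl.frontier_subset (hpF i)) hc hp hcp hε hδ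
  -- subtangential condition for the complement of the interior
  have hsubU : ∀ z ∈ Uᶜ, ∀ ε > 0, ∀ δ > 0, ∃ h : ℝ, 0 < h ∧ h < δ ∧
      infDist (z + h • L' z) Uᶜ ≤ ε * h := by
    intro z hz ε hε δ hδ
    by_cases hzi : z ∈ interior (Uᶜ)
    · exact subtang_interior hzi hε hδ
    · have hUccl : IsClosed (Uᶜ : Set X) := isOpen_interior.isClosed_compl
      have hzf : z ∈ frontier (Uᶜ : Set X) := by
        rw [hUccl.frontier_eq]; exact ⟨hz, hzi⟩
      rw [frontier_compl, hfrU] at hzf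
      obtain ⟨p, c, hpF, hc, hp, hcp⟩ := htang z hzf
      refine subtang_seq hz p c (fun i => ?_) hc hp hcp hε hδ
      have := hpF i
      rw [hfrK] at this
      exact this.2
  -- the complement of the interior is nonempty
  have hUc_ne : (Uᶜ : Set X).Nonempty := by
    obtain ⟨R, hR⟩ := hKcomp.isBounded.subset_closedBall 0
    obtain ⟨v, hv⟩ := exists_ne (0 : X)
    have hvn : 0 < ‖v‖ := norm_pos_iff.2 hv
    refine ⟨((|R| + 1)/‖v‖) • v, fun hmem => ?_⟩
    have hKmem : ((|R| + 1)/‖v‖) • v ∈ K := interior_subset hmem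
    have hnorm : ‖((|R| + 1)/‖v‖) • v‖ = |R| + 1 := by
      rw [norm_smul, Real.norm_eq_abs, abs_of_pos (by positivity), div_mul_cancel₀ _ hvn.ne']
    have := hR hKmem
    rw [mem_closedBall_zero_iff, hnorm] at this
    have := le_abs_self R
    linarith
  have hKne : K.Nonempty := ⟨0, interior_subset h0⟩
  -- the composition identity
  have hEE : ∀ (s : ℝ) (v : X), exp (s • L') (exp ((-s) • L') v) = v := by
    intro s v
    have hcomm : Commute (s • L') ((-s) • L') := ((Commute.refl L').smul_left s).smul_right (-s)
    have hmul : exp (s • L') * exp ((-s) • L') = 1 := by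
      have hball : ∀ y : X →L[ℝ] X, y ∈ Metric.eball (0 : X →L[ℝ] X) (expSeries ℝ (X →L[ℝ] X)).radius :=
        fun y => (expSeries_radius_eq_top ℝ (X →L[ℝ] X)).symm ▸ edist_lt_top _ _
      rw [← exp_add_of_commute_of_mem_ball (𝕂 := ℝ) hcomm (hball _) (hball _), ← add_smul]
      norm_num [exp_zero]
    calc exp (s • L') (exp ((-s) • L') v)
        = (exp (s • L') * exp ((-s) • L')) v := by rw [ContinuousLinearMap.mul_apply]
      _ = v := by rw [hmul, ContinuousLinearMap.one_apply]
  -- forward invariance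
  have hforward : ∀ t : ℝ, 0 ≤ t → (exp (t • L') : X →L[ℝ] X) '' K = K := by
    intro t ht
    have hmapK : ∀ x ∈ K, exp (t • L') x ∈ K := fun x hx =>
      flow_invariant L' K hKcl hKne hsubK hx ht
    have hmapU : ∀ x ∈ (Uᶜ : Set X), exp (t • L') x ∈ (Uᶜ : Set X) := fun x hx =>
      flow_invariant L' Uᶜ isOpen_interior.isClosed_compl hUc_ne hsubU hx ht
    apply Subset.antisymm
    · rintro _ ⟨x, hx, rfl⟩; exact hmapK x hx
    · have hUsub : U ⊆ (exp (t • L') : X →L[ℝ] X) '' U := by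
        intro u hu
        by_cases hcase : exp ((-t) • L') u ∈ U
        · exact ⟨_, hcase, hEE t u⟩
        · exfalso
          have := hmapU _ hcase
          rw [hEE t u] at this
          exact this hu
      have himcl : IsClosed ((exp (t • L') : X →L[ℝ] X) '' K) :=
        (hKcomp.image (exp (t • L')).continuous).isClosed
      have hsub2 : closure U ⊆ (exp (t • L') : X →L[ℝ] X) '' K :=
        closure_minimal (hUsub.trans (image_mono interior_subset)) himcl
      rw [hclU] at hsub2
      exact hsub2
  -- invariance for all times
  have hall : ∀ t : ℝ, (exp (t • L') : X →L[ℝ] X) '' K = K := by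
    intro t
    rcases le_or_gt 0 t with ht | ht
    · exact hforward t ht
    · have hneg := hforward (-t) (by linarith)
      have hcomp : (exp (t • L') : X →L[ℝ] X) ∘ (exp ((- t) • L') : X →L[ℝ] X) = id := by
        funext v; exact hEE t v
      calc (exp (t • L') : X →L[ℝ] X) '' K
          = (exp (t • L') : X →L[ℝ] X) '' ((exp ((-t) • L') : X →L[ℝ] X) '' K) := by
            rw [hneg]
        _ = ((exp (t • L') : X →L[ℝ] X) ∘ (exp ((-t) • L') : X →L[ℝ] X)) '' K := by
            rw [image_comp]
        _ = K := by rw [hcomp, image_id]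
  refine ⟨?_, hall⟩
  -- the trace vanishes
  borelize X
  set b : Module.Basis (Fin (Module.finrank ℝ X)) ℝ X := Module.finBasis ℝ X with hbdef
  set μ := b.addHaar with hμdef
  have hμK0 : μ K ≠ 0 := by
    have hpos : 0 < μ (interior K) := isOpen_interior.measure_pos μ ⟨0, h0⟩
    exact (lt_of_lt_of_le hpos (MeasureTheory.measure_mono interior_subset)).ne'
  have hμKtop : μ K ≠ ⊤ := hKcomp.measure_lt_top.ne
  have hdet : ∀ t : ℝ, |LinearMap.det ((exp (t • L') : X →L[ℝ] X) : X →ₗ[ℝ] X)| = 1 := by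
    intro t
    have him : ((exp (t • L') : X →L[ℝ] X) : X →ₗ[ℝ] X) '' K = K := hall t
    have hmeas := μ.addHaar_image_linearMap ((exp (t • L') : X →L[ℝ] X) : X →ₗ[ℝ] X) K
    rw [him] at hmeas
    have h2 : ENNReal.ofReal |LinearMap.det ((exp (t • L') : X →L[ℝ] X) : X →ₗ[ℝ] X)| * μ K
        = 1 * μ K := by rw [one_mul, ← hmeas]
    have h3 := (ENNReal.mul_left_inj hμK0 hμKtop).1 h2
    rwa [ENNReal.ofReal_eq_one] at h3
  set D : ℝ → ℝ := fun t =>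
    ((LinearMap.toMatrix b b) ((exp (t • L') : X →L[ℝ] X) : X →ₗ[ℝ] X)).det with hDdef
  have hDdet : ∀ t, D t = LinearMap.det ((exp (t • L') : X →L[ℝ] X) : X →ₗ[ℝ] X) :=
    fun t => LinearMap.det_toMatrix b _
  have hE0 : HasDerivAt (fun t : ℝ => exp (t • L')) L' 0 := by
    have := hasDerivAt_exp_smul_const' (𝕂 := ℝ) L' 0
    simpa [exp_zero] using this
  set A : Matrix (Fin (Module.finrank ℝ X)) (Fin (Module.finrank ℝ X)) ℝ :=
    (LinearMap.toMatrix b b) L with hAdef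
  have hentry : ∀ i j, HasDerivAt
      (fun t : ℝ => (LinearMap.toMatrix b b) ((exp (t • L') : X →L[ℝ] X) : X →ₗ[ℝ] X) i j)
      (A i j) 0 := by
    intro i j
    set g : (X →L[ℝ] X) →ₗ[ℝ] ℝ :=
      (LinearMap.proj j).comp ((LinearMap.proj i).comp
        (((LinearMap.toMatrix b b) : (X →ₗ[ℝ] X) ≃ₗ[ℝ] _).toLinearMap.comp
          (ContinuousLinearMap.coeLM ℝ))) with hgdef
    have hg := (LinearMap.toContinuousLinearMap g).hasFDerivAt.comp_hasDerivAt 0 hE0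
    have hgL : (LinearMap.toContinuousLinearMap g) L' = A i j := by
      simp only [hgdef, hAdef, LinearMap.toContinuousLinearMap, hL'def,
        LinearMap.coe_comp, Function.comp_apply, LinearMap.coe_mk, AddHom.coe_mk,
        LinearEquiv.coe_coe, LinearMap.proj_apply]
      rfl
    have hgt : ∀ t : ℝ, (LinearMap.toContinuousLinearMap g) (exp (t • L')) =
        (LinearMap.toMatrix b b) ((exp (t • L') : X →L[ℝ] X) : X →ₗ[ℝ] X) i j := by
      intro t
      simp only [hgdef, LinearMap.toContinuousLinearMap, LinearMap.coe_comp,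
        Function.comp_apply, LinearMap.coe_mk, AddHom.coe_mk, LinearEquiv.coe_coe,
        LinearMap.proj_apply]
      rfl
    rw [hgL] at hg
    exact hg.congr_deriv rfl |>.congr_of_eventuallyEq (Eventually.of_forall fun t => (hgt t).symm)
  have hM1 : (fun t : ℝ =>
      (LinearMap.toMatrix b b) ((exp (t • L') : X →L[ℝ] X) : X →ₗ[ℝ] X)) 0 = 1 := by
    simp only [zero_smul, exp_zero]
    rw [show ((1 : X →L[ℝ] X) : X →ₗ[ℝ] X) = LinearMap.id from rfl, LinearMap.toMatrix_id]
  have hD : HasDerivAt D (Matrix.trace A) 0 := hasDerivAt_det_at_one hentry hM1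
  have hD0 : D 0 = 1 := by
    rw [hDdef]
    simp only [zero_smul, exp_zero]
    rw [show ((1 : X →L[ℝ] X) : X →ₗ[ℝ] X) = LinearMap.id from rfl, LinearMap.toMatrix_id,
      Matrix.det_one]
  have hDpm : ∀ t, D t = 1 ∨ D t = -1 := by
    intro t
    have h := hdet t
    rw [← hDdet] at h
    exact (abs_eq (by norm_num : (0:ℝ) ≤ 1)).1 h
  have hev : ∀ᶠ t in 𝓝 (0:ℝ), D t = 1 := by
    have hcont : ContinuousAt D 0 := hD.continuousAt
    have h1 : ∀ᶠ t in 𝓝 (0:ℝ), dist (D t) (D 0) < 1 := Metric.tendsto_nhds.mp hcont 1 one_pos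
    filter_upwards [h1] with t h1t
    rcases hDpm t with h | h
    · exact h
    · exfalso
      rw [h, hD0, Real.dist_eq] at h1t
      norm_num at h1t
  have hzero : HasDerivAt D 0 0 :=
    (hasDerivAt_const (0:ℝ) (1:ℝ)).congr_of_eventuallyEq hev
  have htr : Matrix.trace A = 0 := hD.unique hzero
  rw [LinearMap.trace_eq_matrix_trace ℝ b L]
  exact htr
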